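/- If S is a numerical semigroup of multiplicity m with maximal embedding dimension, and R = k[S] is its semigroup ring over a field k, then dim_k Tor_0^R(k, k) = 1 and dim_k Tor_d^R(k, k) = m(m−1)^{d−1} for every d ≥ 1; equivalently, P_k^R(z) = (1 + z)/(1 − (m−1)z) as formal power series. (Consequence of Theorem 3.2, used in the proof of Corollary 3.7.) -/

import Mathlib

open Polynomial CategoryTheory

set_option synthInstance.maxHeartbeats 1000000
set_option maxHeartbeats 1600000


/-- A numerical semigroup: a cofinite additive submonoid of `ℕ`. -/
structure NumericalSemigroup where
  carrier : AddSubmonoid ℕ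
  cofinite : ((carrier : Set ℕ))ᶜ.Finite

namespace NumericalSemigroup

/-- The multiplicity `m = min (S \ {0})`. -/
noncomputable def mult (S : NumericalSemigroup) : ℕ :=
  sInf {n | n ∈ S.carrier ∧ n ≠ 0}

/-- `apery S i` is the smallest element of `S` congruent to `i` mod `m`. -/
noncomputable def apery (S : NumericalSemigroup) (i : ℕ) : ℕ :=
  sInf {n | n ∈ S.carrier ∧ n % S.mult = i % S.mult}

lemma exists_bound (S : NumericalSemigroup) : ∃ N, ∀ n, N ≤ n → n ∈ S.carrier := by
  obtain ⟨C, hC⟩ := S.cofinite.bddAbove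
  refine ⟨C + 1, fun n hn => ?_⟩
  by_contra h
  exact absurd (hC h) (by omega)

lemma mult_spec (S : NumericalSemigroup) : S.mult ∈ S.carrier ∧ S.mult ≠ 0 := by
  obtain ⟨N, hN⟩ := S.exists_bound
  have h : {n | n ∈ S.carrier ∧ n ≠ 0}.Nonempty := ⟨N + 1, hN _ (by omega), by omega⟩
  exact Nat.sInf_mem h

lemma apery_spec (S : NumericalSemigroup) (i : ℕ) :
    S.apery i ∈ S.carrier ∧ S.apery i % S.mult = i % S.mult := by
  obtain ⟨N, hN⟩ := S.exists_bound
  have hm : S.mult ≠ 0 := S.mult_spec.2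
  have h : {n | n ∈ S.carrier ∧ n % S.mult = i % S.mult}.Nonempty := by
    refine ⟨i % S.mult + S.mult * (N + 1), hN _ ?_, ?_⟩
    · have h1 : 1 ≤ S.mult := Nat.one_le_iff_ne_zero.mpr hm
      have : N + 1 ≤ S.mult * (N + 1) := Nat.le_mul_of_pos_left _ h1
      omega
    · simp [Nat.add_mul_mod_self_left, Nat.mod_mod_of_dvd]
  exact Nat.sInf_mem h

/-- The Apéry numbers `a_i` for `i ∈ ℤ/m`, with the convention `a_0 = m`. -/
noncomputable def a (S : NumericalSemigroup) (i : ZMod S.mult) : ℕ :=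
  if i = 0 then S.mult else S.apery i.val

lemma a_mem (S : NumericalSemigroup) (i : ZMod S.mult) : S.a i ∈ S.carrier := by
  unfold a; split
  · exact S.mult_spec.1
  · exact (S.apery_spec _).1

/-- The quantities `b_{ij} = (a_i + a_j - a_{i+j})/m`. -/
noncomputable def b (S : NumericalSemigroup) (i j : ZMod S.mult) : ℕ :=
  (S.a i + S.a j - S.a (i + j)) / S.mult

/-- The semigroup algebra `k[S]`, realized as the subalgebra of `k[t]`
spanned by the monomials `t^s` with `s ∈ S`. -/
def toRing (k : Type) [Field k] (S : NumericalSemigroup) : Subalgebra k (Polynomial k) where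
  carrier := {p | ∀ n, p.coeff n ≠ 0 → n ∈ S.carrier}
  add_mem' := by
    intro p q hp hq n h
    rw [Set.mem_setOf_eq] at hp hq
    by_contra hn
    have h1 : (p : Polynomial k).coeff n = 0 := by by_contra hc; exact hn (hp n hc)
    have h2 : (q : Polynomial k).coeff n = 0 := by by_contra hc; exact hn (hq n hc)
    simp [coeff_add, h1, h2] at h
  mul_mem' := by
    intro p q hp hq n h
    rw [Set.mem_setOf_eq] at hp hq
    rw [Polynomial.coeff_mul] at h
    obtain ⟨⟨u, v⟩, huv, hne⟩ := Finset.exists_ne_zero_of_sum_ne_zero h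
    obtain ⟨h1, h2⟩ := mul_ne_zero_iff.mp hne
    have : u + v = n := Finset.HasAntidiagonal.mem_antidiagonal.mp huv
    exact this ▸ S.carrier.add_mem (hp u h1) (hq v h2)
  algebraMap_mem' := by
    intro r n h
    have : n = 0 := by
      by_contra hn
      simp [Polynomial.coeff_C, hn] at h
    exact this ▸ S.carrier.zero_mem

variable (k : Type) [Field k] (S : NumericalSemigroup)

/-- The monomial `x_j = t^{a_j}` as an element of `k[S]`. -/
noncomputable def xv (j : ZMod S.mult) : S.toRing k :=
  ⟨X ^ S.a j, by
    intro n h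
    have : n = S.a j := by
      by_contra hn
      simp [coeff_X_pow, hn] at h
    exact this ▸ S.a_mem j⟩

/-- The augmentation `k[S] → k = k[S]/𝔪`, given by the constant coefficient. -/
noncomputable def aug : S.toRing k →+* k :=
  (Polynomial.constantCoeff).comp ((S.toRing k).val.toRingHom)

/-- The maximal ideal `𝔪` of `k[S]`. -/
noncomputable def mIdeal : Ideal (S.toRing k) :=
  RingHom.ker (S.aug k)

/-- The residue field `k = k[S]/𝔪` as a module over `k[S]`. -/
def ResMod (_S : NumericalSemigroup) : Type := k

noncomputable instance : AddCommGroup (ResMod k S) := inferInstanceAs (AddCommGroup k)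
noncomputable instance : Module (S.toRing k) (ResMod k S) := Module.compHom k (S.aug k)

/-- `dim_k Tor_i^{k[S]}(k, k)` as a cardinal. -/
noncomputable def torDim (i : ℕ) : Cardinal :=
  Module.rank k (RestrictScalars k (S.toRing k)
    (((Tor (ModuleCat (S.toRing k)) i).obj
        (ModuleCat.of (S.toRing k) (ResMod k S))).obj
      (ModuleCat.of (S.toRing k) (ResMod k S))))


/-- The set of minimal generators of `S`: nonzero elements of `S` that are not sums of
two nonzero elements of `S`. -/
def minimalGenerators (T : NumericalSemigroup) : Set ℕ :=
  {n | n ∈ T.carrier ∧ n ≠ 0 ∧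
    ¬∃ u ∈ T.carrier, ∃ v ∈ T.carrier, u ≠ 0 ∧ v ≠ 0 ∧ u + v = n}

/-- `S` has maximal embedding dimension: the number of minimal generators equals the
multiplicity. -/
def IsMED (T : NumericalSemigroup) : Prop :=
  T.minimalGenerators.ncard = T.mult


section Phase1

variable (S : NumericalSemigroup)

instance : NeZero S.mult := ⟨S.mult_spec.2⟩

lemma mult_le {s : ℕ} (hs : s ∈ S.carrier) (h : s ≠ 0) : S.mult ≤ s :=
  Nat.sInf_le ⟨hs, h⟩

lemma mul_mult_mem (c : ℕ) : c * S.mult ∈ S.carrier := by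
  induction c with
  | zero => simpa using S.carrier.zero_mem
  | succ n ih => rw [Nat.succ_mul]; exact S.carrier.add_mem ih S.mult_spec.1

lemma dvd_mem {s : ℕ} (h : S.mult ∣ s) : s ∈ S.carrier := by
  obtain ⟨c, rfl⟩ := h
  rw [mul_comm]; exact S.mul_mult_mem c

lemma a_mod (i : ZMod S.mult) : S.a i % S.mult = i.val := by
  unfold a
  split
  · subst ‹i = 0›; simp [ZMod.val_zero]
  · rw [(S.apery_spec i.val).2, Nat.mod_eq_of_lt (ZMod.val_lt i)]

lemma mult_le_a (i : ZMod S.mult) : S.mult ≤ S.a i := by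
  unfold a
  split
  · exact le_rfl
  · refine S.mult_le (S.apery_spec i.val).1 ?_
    intro h0
    have := S.a_mod i
    unfold a at this
    rw [if_neg ‹¬ i = 0›] at this
    rw [h0] at this
    simp at this
    exact ‹¬ i = 0› (by
      have : i.val = 0 := this.symm
      exact (ZMod.val_eq_zero i).mp this)

lemma a_pos (i : ZMod S.mult) : 0 < S.a i :=
  lt_of_lt_of_le (Nat.pos_of_ne_zero S.mult_spec.2) (S.mult_le_a i)

lemma a_ne_zero (i : ZMod S.mult) : S.a i ≠ 0 := (S.a_pos i).ne'

lemma mult_lt_a {i : ZMod S.mult} (hi : i ≠ 0) : S.mult < S.a i := by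
  rcases lt_or_eq_of_le (S.mult_le_a i) with h | h
  · exact h
  · exfalso
    have := S.a_mod i
    rw [← h, Nat.mod_self] at this
    exact hi ((ZMod.val_eq_zero i).mp this.symm)

lemma a_injective : Function.Injective (S.a) := by
  intro i j h
  have hi := S.a_mod i
  have hj := S.a_mod j
  rw [h, hj] at hi
  exact ZMod.val_injective _ hi.symm

lemma a_le {i : ZMod S.mult} (hi : i ≠ 0) {s : ℕ} (hs : s ∈ S.carrier)
    (h : s % S.mult = i.val) : S.a i ≤ s := by
  unfold a
  rw [if_neg hi]
  exact Nat.sInf_le ⟨hs, by rw [h, Nat.mod_eq_of_lt (ZMod.val_lt i)]⟩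

lemma a_zero : S.a 0 = S.mult := by unfold a; simp

/-- Every nonzero element of `S` congruent to `i` is `a i + ` a multiple of `m`;
consequence: `a ((s : ZMod m)) ≤ s` for `s ∈ S`, `s ≠ 0`. -/
lemma a_natCast_le {s : ℕ} (hs : s ∈ S.carrier) (h0 : s ≠ 0) :
    S.a (s : ZMod S.mult) ≤ s := by
  by_cases hi : (s : ZMod S.mult) = 0
  · rw [hi, a_zero]; exact S.mult_le hs h0
  · exact S.a_le hi hs (by rw [ZMod.val_natCast])

lemma a_mod_eq_mod {s : ℕ} : S.a (s : ZMod S.mult) % S.mult = s % S.mult := by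
  rw [S.a_mod, ZMod.val_natCast]

lemma dvd_sub_a {s : ℕ} (hs : s ∈ S.carrier) (h0 : s ≠ 0) :
    S.mult ∣ s - S.a (s : ZMod S.mult) :=
  (Nat.modEq_iff_dvd' (S.a_natCast_le hs h0)).mp (S.a_mod_eq_mod)

lemma mem_of_a_le {s : ℕ} (hs : s ∈ S.carrier) (h0 : s ≠ 0) :
    s - S.a (s : ZMod S.mult) ∈ S.carrier :=
  S.dvd_mem (S.dvd_sub_a hs h0)

/-- The minimal generators are among `{a i}`. -/
lemma minimalGenerators_subset : S.minimalGenerators ⊆ Set.range S.a := by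
  rintro n ⟨hn, hn0, hnsum⟩
  refine ⟨(n : ZMod S.mult), ?_⟩
  have hle := S.a_natCast_le hn hn0
  rcases lt_or_eq_of_le hle with h | h
  · exfalso
    exact hnsum ⟨S.a (n : ZMod S.mult), S.a_mem _, n - S.a (n : ZMod S.mult),
      S.mem_of_a_le hn hn0, S.a_ne_zero _, by omega, by omega⟩
  · exact h

lemma mult_mem_minimalGenerators : S.mult ∈ S.minimalGenerators := by
  refine ⟨S.mult_spec.1, S.mult_spec.2, ?_⟩
  rintro ⟨u, hu, v, hv, hu0, hv0, huv⟩
  have h1 := S.mult_le hu hu0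
  have h2 := S.mult_le hv hv0
  have := S.mult_spec.2
  omega

lemma range_a_finite : (Set.range S.a).Finite := Set.finite_range _

lemma ncard_range_a : (Set.range S.a).ncard = S.mult := by
  have : (Set.range S.a).ncard = Fintype.card (ZMod S.mult) := by
    rw [Set.ncard_eq_toFinset_card', Set.toFinset_range]
    rw [Finset.card_image_of_injective _ S.a_injective, Finset.card_univ]
  rw [this, ZMod.card]

/-- Under MED, the minimal generators are exactly the `a i`. -/
lemma minimalGenerators_eq (hmed : S.IsMED) : S.minimalGenerators = Set.range S.a := by
  refine Set.eq_of_subset_of_ncard_le S.minimalGenerators_subset ?_ S.range_a_finite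
  rw [S.ncard_range_a, hmed]

lemma a_mem_minimalGenerators (hmed : S.IsMED) (i : ZMod S.mult) :
    S.a i ∈ S.minimalGenerators := by
  rw [S.minimalGenerators_eq hmed]; exact ⟨i, rfl⟩

/-- Key MED property: `u + v - m ∈ S` for nonzero `u v ∈ S`. -/
lemma sub_mem (hmed : S.IsMED) {u v : ℕ} (hu : u ∈ S.carrier) (hv : v ∈ S.carrier)
    (hu0 : u ≠ 0) (hv0 : v ≠ 0) : u + v - S.mult ∈ S.carrier := by
  have hm := S.mult_spec
  have hum := S.mult_le hu hu0
  have hvm := S.mult_le hv hv0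
  obtain ⟨w, hw⟩ : ∃ w, w = u + v := ⟨_, rfl⟩
  rw [← hw]
  have hwS : w ∈ S.carrier := hw ▸ S.carrier.add_mem hu hv
  have hw0 : w ≠ 0 := by omega
  have hle := S.a_natCast_le hwS hw0
  rcases lt_or_eq_of_le hle with h | h
  · -- w > a i : then w - a i is a positive multiple of m
    have h2 := S.mem_of_a_le hwS hw0
    obtain ⟨c, hc⟩ := S.dvd_sub_a hwS hw0
    have hc1 : 1 ≤ c := by
      rcases Nat.eq_zero_or_pos c with h0 | h0
      · exfalso; rw [h0, mul_zero] at hc; omega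
      · exact h0
    have h4 : w - S.mult = S.a (w : ZMod S.mult) + S.mult * (c - 1) := by
      have hm : 0 < S.mult := Nat.pos_of_ne_zero S.mult_spec.2
      have hfm : S.mult ≤ S.mult * c := Nat.le_mul_of_pos_right _ hc1
      have hge : S.mult + S.mult ≤ w := by omega
      have : S.mult * (c-1) = S.mult * c - S.mult := by
        cases c with
        | zero => omega
        | succ n => rw [Nat.succ_sub_one, Nat.mul_succ]; omega
      omega
    rw [h4]
    exact S.carrier.add_mem (S.a_mem _) (S.dvd_mem ⟨c - 1, rfl⟩)
  · -- w = a i : then a i is a sum of two nonzero elements, contradicting minimality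
    exfalso
    have hmin := S.a_mem_minimalGenerators hmed (w : ZMod S.mult)
    exact hmin.2.2 ⟨u, hu, v, hv, hu0, hv0, by omega⟩

lemma a_sub_not_mem {i : ZMod S.mult} (hi : i ≠ 0) : S.a i - S.mult ∉ S.carrier := by
  intro hmem
  have h1 := S.mult_lt_a hi
  have h2 : (S.a i - S.mult) % S.mult = i.val := by
    rw [← Nat.mod_eq_sub_mod (le_of_lt h1)]
    exact S.a_mod i
  have h3 := S.a_le hi hmem h2
  have h4 : S.a i - S.mult < S.a i := Nat.sub_lt (S.a_pos i) (Nat.pos_of_ne_zero S.mult_spec.2)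
  omega

end Phase1

section Phase2

variable (k : Type) [Field k] (S : NumericalSemigroup)

/-- The subtype of nonzero residues. -/
abbrev V := {i : ZMod S.mult // i ≠ 0}

lemma aug_apply (p : S.toRing k) : S.aug k p = (p : Polynomial k).coeff 0 := rfl

lemma aug_algebraMap (c : k) : S.aug k (algebraMap k (S.toRing k) c) = c := by
  rw [aug_apply]
  simp

lemma xv_val (j : ZMod S.mult) : ((S.xv k j : S.toRing k) : Polynomial k) = X ^ S.a j := rfl

lemma aug_xv (j : ZMod S.mult) : S.aug k (S.xv k j) = 0 := by
  rw [aug_apply, xv_val, coeff_X_pow, if_neg (S.a_ne_zero j).symm]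

lemma yv_exp_mem (hmed : S.IsMED) (i j : ZMod S.mult) :
    S.a i + S.a j - S.mult ∈ S.carrier := by
  by_cases hi : i = 0
  · subst hi
    rw [S.a_zero]
    have : S.mult + S.a j - S.mult = S.a j := by omega
    rw [this]; exact S.a_mem j
  · by_cases hj : j = 0
    · subst hj
      rw [S.a_zero]
      have : S.a i + S.mult - S.mult = S.a i := by omega
      rw [this]; exact S.a_mem i
    · exact S.sub_mem hmed (S.a_mem i) (S.a_mem j) (S.a_ne_zero i) (S.a_ne_zero j)

/-- The monomials `y_{ij} = t^{a_i + a_j - m}`. -/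
noncomputable def yv (hmed : S.IsMED) (i j : ZMod S.mult) : S.toRing k :=
  ⟨X ^ (S.a i + S.a j - S.mult), by
    intro n h
    have : n = S.a i + S.a j - S.mult := by
      by_contra hn
      simp [coeff_X_pow, hn] at h
    exact this ▸ S.yv_exp_mem hmed i j⟩

lemma yv_val (hmed : S.IsMED) (i j : ZMod S.mult) :
    ((S.yv k hmed i j : S.toRing k) : Polynomial k) = X ^ (S.a i + S.a j - S.mult) := rfl

lemma aug_yv (hmed : S.IsMED) (i j : ZMod S.mult) : S.aug k (S.yv k hmed i j) = 0 := by
  rw [aug_apply, yv_val, coeff_X_pow, if_neg]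
  have h1 := S.mult_le_a i
  have h2 := S.mult_le_a j
  have h3 := Nat.pos_of_ne_zero S.mult_spec.2
  omega

lemma xv_mul_yv (hmed : S.IsMED) (i j : ZMod S.mult) :
    S.xv k 0 * S.yv k hmed i j = S.xv k i * S.xv k j := by
  apply Subtype.ext
  push_cast [xv_val, yv_val, MulMemClass.coe_mul]
  rw [← pow_add, ← pow_add]
  congr 1
  have h1 := S.mult_le_a i
  have h2 := S.mult_le_a j
  rw [S.a_zero]
  omega

lemma yv_mul_yv (hmed : S.IsMED) (i i' j : ZMod S.mult) :
    S.yv k hmed i 0 * S.yv k hmed i' j = S.yv k hmed i i' * S.xv k j := by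
  apply Subtype.ext
  push_cast [xv_val, yv_val, MulMemClass.coe_mul]
  rw [← pow_add, ← pow_add]
  congr 1
  have h1 := S.mult_le_a i
  have h2 := S.mult_le_a i'
  have h3 := S.mult_le_a j
  rw [S.a_zero]
  omega

lemma xv_zero_cancel {z : S.toRing k} (h : S.xv k 0 * z = 0) : z = 0 := by
  apply Subtype.ext
  have hv : (X : Polynomial k) ^ S.a 0 * (z : Polynomial k) = 0 := by
    have := congrArg (Subtype.val) h
    push_cast [MulMemClass.coe_mul, xv_val] at this
    exact_mod_cast this
  have hX : (X : Polynomial k) ^ S.a 0 ≠ 0 := pow_ne_zero _ X_ne_zero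
  simpa using (mul_eq_zero.mp hv).resolve_left hX

/-- Generation of the maximal ideal by the monomials `x_j`. -/
lemma gen_decomp (p : S.toRing k) (hp : S.aug k p = 0) :
    ∃ q : ZMod S.mult → S.toRing k, p = ∑ j, S.xv k j * q j := by
  obtain ⟨N, hN⟩ : ∃ N, (p : Polynomial k).support.card ≤ N := ⟨_, le_rfl⟩
  induction N generalizing p with
  | zero =>
    refine ⟨0, ?_⟩
    have : (p : Polynomial k) = 0 := by
      rw [← Polynomial.support_eq_empty]
      exact Finset.card_eq_zero.mp (Nat.le_zero.mp hN)
    have hp0 : p = 0 := Subtype.ext this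
    simp [hp0]
  | succ N ih =>
    by_cases hz : (p : Polynomial k) = 0
    · refine ⟨0, ?_⟩
      have hp0 : p = 0 := Subtype.ext hz
      simp [hp0]
    · have hc : (p : Polynomial k).coeff (p : Polynomial k).natDegree ≠ 0 :=
        mt Polynomial.leadingCoeff_eq_zero.mp hz
      set n := (p : Polynomial k).natDegree with hndef
      set c := (p : Polynomial k).coeff n with hcdef
      have hnS : n ∈ S.carrier := p.2 n hc
      have hn0 : n ≠ 0 := fun h0 => hc (by rw [hcdef, h0, ← aug_apply]; exact hp)
      set j : ZMod S.mult := (n : ZMod S.mult) with hjdef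
      have haj : S.a j ≤ n := S.a_natCast_le hnS hn0
      have hsub : n - S.a j ∈ S.carrier := S.mem_of_a_le hnS hn0
      set r : S.toRing k := ⟨C c * X ^ (n - S.a j), by
        intro t ht
        have : t = n - S.a j := by
          by_contra htne
          simp [coeff_C_mul, coeff_X_pow, htne] at ht
        exact this ▸ hsub⟩ with hrdef
      have hxr : ((S.xv k j * r : S.toRing k) : Polynomial k) = C c * X ^ n := by
        push_cast [MulMemClass.coe_mul, xv_val]
        rw [mul_left_comm, ← pow_add]
        congr 2
        omega
      set p' : S.toRing k := p - S.xv k j * r with hp'def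
      have hp'val : (p' : Polynomial k) = (p : Polynomial k).eraseLead := by
        push_cast [hp'def, hxr]
        rw [← Polynomial.self_sub_C_mul_X_pow]
        rfl
      have hcard : (p' : Polynomial k).support.card ≤ N := by
        rw [hp'val]
        have := Polynomial.eraseLead_support_card_lt hz
        omega
      have hp'aug : S.aug k p' = 0 := by
        rw [aug_apply, hp'val, ← hp'val, hp'def]
        push_cast [hxr]
        rw [Polynomial.coeff_sub, coeff_C_mul, coeff_X_pow, if_neg (Ne.symm hn0)]
        rw [aug_apply] at hp
        simp [hp]
      obtain ⟨q', hq'⟩ := ih p' hp'aug hcard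
      refine ⟨fun l => q' l + if l = j then r else 0, ?_⟩
      have hsum : (∑ l, S.xv k l * (q' l + if l = j then r else 0))
          = (∑ l, S.xv k l * q' l) + ∑ l, if l = j then S.xv k l * r else 0 := by
        rw [← Finset.sum_add_distrib]
        refine Finset.sum_congr rfl (fun l _ => ?_)
        rw [mul_add, mul_ite, mul_zero]
      rw [hsum, Finset.sum_ite_eq' Finset.univ j (fun l => S.xv k l * r),
        if_pos (Finset.mem_univ j), ← hq', hp'def]
      ring

end Phase2

section Phase3

variable (k : Type) [Field k] (S : NumericalSemigroup)

lemma sum_zmod_split {M : Type} [AddCommMonoid M] (F : ZMod S.mult → M) :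
    ∑ j, F j = F 0 + ∑ i : V S, F i.1 := by
  classical
  have h1 : ∑ i : V S, F i.1 = ∑ j ∈ Finset.univ.erase (0 : ZMod S.mult), F j :=
    (Finset.sum_subtype (Finset.univ.erase 0) (fun x => by simp) F).symm
  rw [h1]
  exact (Finset.add_sum_erase _ F (Finset.mem_univ 0)).symm

lemma syzygy_aug_zero (hmed : S.IsMED) (r : ZMod S.mult → S.toRing k)
    (h : ∑ j, S.xv k j * r j = 0) {i : ZMod S.mult} (hi : i ≠ 0) :
    S.aug k (r i) = 0 := by
  have hval : ∑ j, (r j : Polynomial k) * X ^ S.a j = 0 := by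
    have h2 := congrArg (Subtype.val) h
    push_cast at h2
    rw [← h2]
    exact Finset.sum_congr rfl fun j _ => by rw [xv_val, mul_comm]
  have hcoeff := congrArg (fun q => Polynomial.coeff q (S.a i)) hval
  simp only [Polynomial.finset_sum_coeff, Polynomial.coeff_mul_X_pow',
    Polynomial.coeff_zero] at hcoeff
  rw [Finset.sum_eq_single i] at hcoeff
  · rw [aug_apply]
    rw [if_pos le_rfl, Nat.sub_self] at hcoeff
    exact hcoeff
  · intro b _ hb
    split_ifs with hle
    · by_contra hne
      have hsS : S.a i - S.a b ∈ S.carrier := (r b).2 _ hne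
      have hs0 : S.a i - S.a b ≠ 0 := by
        intro h0
        have : S.a i = S.a b := by omega
        exact hb (S.a_injective this.symm)
      have hmem := S.sub_mem hmed hsS (S.a_mem b) hs0 (S.a_ne_zero b)
      have heq : S.a i - S.a b + S.a b - S.mult = S.a i - S.mult := by omega
      rw [heq] at hmem
      exact S.a_sub_not_mem hi hmem
    · rfl
  · intro hni
    exact absurd (Finset.mem_univ i) hni

lemma syzygy (hmed : S.IsMED) (r : ZMod S.mult → S.toRing k)
    (h : ∑ j, S.xv k j * r j = 0) :
    ∃ s : V S → ZMod S.mult → S.toRing k,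
      (∀ i : V S, r i.1 = ∑ j, S.xv k j * s i j) ∧
      r 0 = -∑ i : V S, ∑ j, S.yv k hmed i.1 j * s i j := by
  have hs : ∀ i : V S, ∃ q : ZMod S.mult → S.toRing k, r i.1 = ∑ j, S.xv k j * q j := fun i =>
    S.gen_decomp k (r i.1) (S.syzygy_aug_zero k hmed r h i.2)
  choose s hsspec using hs
  refine ⟨s, hsspec, ?_⟩
  have hT : S.xv k 0 * (r 0 + ∑ i : V S, ∑ j, S.yv k hmed i.1 j * s i j) = 0 := by
    rw [mul_add, Finset.mul_sum]
    have hstep : ∀ i : V S, (S.xv k 0 * ∑ j, S.yv k hmed i.1 j * s i j)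
        = S.xv k i.1 * r i.1 := by
      intro i
      rw [Finset.mul_sum, hsspec i, Finset.mul_sum]
      refine Finset.sum_congr rfl (fun j _ => ?_)
      rw [← mul_assoc, S.xv_mul_yv k hmed i.1 j, mul_assoc]
    rw [Finset.sum_congr rfl (fun i _ => hstep i)]
    rw [← S.sum_zmod_split (fun j => S.xv k j * r j), h]
  have hzero := S.xv_zero_cancel k hT
  linear_combination (norm := ring_nf) hzero
end Phase3

section Phase4

variable (k : Type) [Field k] (S : NumericalSemigroup)

lemma trmul_neg (a b : S.toRing k) : a * -b = -(a * b) := mul_neg a b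

lemma trneg_inj {a b : S.toRing k} : -a = -b ↔ a = b := neg_inj

lemma trneg_add_eq_zero {a b : S.toRing k} : -a + b = 0 ↔ a = b := neg_add_eq_zero

/-- Index types for the free modules in the resolution. -/
def B : ℕ → Type
  | 0 => PUnit
  | (d+1) => (Fin d → V S) × ZMod S.mult

noncomputable instance Bfintype : ∀ d, Fintype (S.B d)
  | 0 => inferInstanceAs (Fintype PUnit)
  | (d+1) => inferInstanceAs (Fintype ((Fin d → V S) × ZMod S.mult))

/-- The free modules in the resolution. -/
noncomputable def FF (d : ℕ) : ModuleCat (S.toRing k) := ModuleCat.of _ (S.B d → S.toRing k)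

/-- The differentials, as raw functions. -/
noncomputable def diffFun (hmed : S.IsMED) :
    ∀ d, (S.B (d+1) → S.toRing k) → (S.B d → S.toRing k)
  | 0 => fun f _ => ∑ j, S.xv k j * f ((fun i => i.elim0), j)
  | (e+1) => fun f wl =>
      if h : wl.2 = 0 then -∑ i : V S, ∑ j, S.yv k hmed i.1 j * f (Fin.snoc wl.1 i, j)
      else ∑ j, S.xv k j * f (Fin.snoc wl.1 ⟨wl.2, h⟩, j)

lemma diffFun_add (hmed : S.IsMED) (d : ℕ) (f g : S.B (d+1) → S.toRing k) :
    diffFun k S hmed d (f + g) = diffFun k S hmed d f + diffFun k S hmed d g := by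
  cases d with
  | zero =>
    funext u
    simp only [diffFun, Pi.add_apply]
    rw [← Finset.sum_add_distrib]
    exact Finset.sum_congr rfl fun x _ => mul_add _ _ _
  | succ e =>
    funext wl
    by_cases h : wl.2 = 0
    · simp only [diffFun, dif_pos h, Pi.add_apply]
      rw [← neg_add, neg_inj, ← Finset.sum_add_distrib]
      refine Finset.sum_congr rfl fun i _ => ?_
      rw [← Finset.sum_add_distrib]
      exact Finset.sum_congr rfl fun j _ => mul_add _ _ _
    · simp only [diffFun, dif_neg h, Pi.add_apply]
      rw [← Finset.sum_add_distrib]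
      exact Finset.sum_congr rfl fun x _ => mul_add _ _ _

lemma diffFun_smul (hmed : S.IsMED) (d : ℕ) (c : S.toRing k) (f : S.B (d+1) → S.toRing k) :
    diffFun k S hmed d (c • f) = c • diffFun k S hmed d f := by
  cases d with
  | zero =>
    funext u
    simp only [diffFun, Pi.smul_apply, smul_eq_mul]
    rw [Finset.mul_sum]
    exact Finset.sum_congr rfl fun x _ => (mul_left_comm _ _ _)
  | succ e =>
    funext wl
    by_cases h : wl.2 = 0
    · simp only [diffFun, dif_pos h, Pi.smul_apply, smul_eq_mul]
      simp only [S.trmul_neg k, S.trneg_inj k, Finset.mul_sum]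
      refine Finset.sum_congr rfl fun i _ => ?_
      exact Finset.sum_congr rfl fun j _ => (mul_left_comm _ _ _)
    · simp only [diffFun, dif_neg h, Pi.smul_apply, smul_eq_mul]
      rw [Finset.mul_sum]
      exact Finset.sum_congr rfl fun x _ => (mul_left_comm _ _ _)

/-- The differentials as module maps. -/
noncomputable def diffL (hmed : S.IsMED) (d : ℕ) : FF k S (d+1) ⟶ FF k S d :=
  ModuleCat.ofHom
  { toFun := diffFun k S hmed d
    map_add' := diffFun_add k S hmed d
    map_smul' := diffFun_smul k S hmed d }

lemma key_cancel (hmed : S.IsMED) {e : ℕ} (w : Fin e → V S)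
    (g : S.B (e+2) → S.toRing k) :
    ∑ j, S.xv k j * (diffFun k S hmed (e+1) g (w, j)) = 0 := by
  rw [S.sum_zmod_split (fun j => S.xv k j * (diffFun k S hmed (e+1) g (w, j)))]
  have h0 : diffFun k S hmed (e+1) g (w, (0 : ZMod S.mult))
      = -∑ i : V S, ∑ j', S.yv k hmed i.1 j' * g (Fin.snoc w i, j') := by
    simp [diffFun]
  have h1 : ∀ i : V S, diffFun k S hmed (e+1) g (w, i.1)
      = ∑ j', S.xv k j' * g (Fin.snoc w i, j') := by
    intro i
    simp only [diffFun, dif_neg i.2, Subtype.coe_eta]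
  beta_reduce
  have h2 : ∑ i : V S, S.xv k i.1 * diffFun k S hmed (e+1) g (w, i.1)
      = ∑ i : V S, ∑ j', S.xv k i.1 * (S.xv k j' * g (Fin.snoc w i, j')) := by
    refine Finset.sum_congr rfl fun i _ => ?_
    rw [h1 i, Finset.mul_sum]
  rw [h0, h2]
  simp only [S.trmul_neg k, Finset.mul_sum]
  rw [S.trneg_add_eq_zero k]
  refine Finset.sum_congr rfl fun i _ => ?_
  refine Finset.sum_congr rfl fun j' _ => ?_
  rw [← mul_assoc, ← mul_assoc, S.xv_mul_yv k hmed i.1 j']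

lemma key_cancel2 (hmed : S.IsMED) {e : ℕ} (w : Fin e → V S)
    (f : S.B (e+3) → S.toRing k) (i : V S) :
    ∑ j, S.yv k hmed i.1 j * (diffFun k S hmed (e+2) f (Fin.snoc w i, j)) = 0 := by
  rw [S.sum_zmod_split (fun j => S.yv k hmed i.1 j * (diffFun k S hmed (e+2) f (Fin.snoc w i, j)))]
  have h0 : diffFun k S hmed (e+2) f (Fin.snoc w i, (0 : ZMod S.mult))
      = -∑ i' : V S, ∑ j', S.yv k hmed i'.1 j' * f (Fin.snoc (Fin.snoc w i) i', j') := by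
    simp [diffFun]
  have h1 : ∀ i' : V S, diffFun k S hmed (e+2) f (Fin.snoc w i, i'.1)
      = ∑ j', S.xv k j' * f (Fin.snoc (Fin.snoc w i) i', j') := by
    intro i'
    simp only [diffFun, dif_neg i'.2, Subtype.coe_eta]
  beta_reduce
  have h2 : ∑ i' : V S, S.yv k hmed i.1 i'.1 * diffFun k S hmed (e+2) f (Fin.snoc w i, i'.1)
      = ∑ i' : V S, ∑ j', S.yv k hmed i.1 i'.1 * (S.xv k j' * f (Fin.snoc (Fin.snoc w i) i', j')) := by
    refine Finset.sum_congr rfl fun i' _ => ?_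
    rw [h1 i', Finset.mul_sum]
  rw [h0, h2]
  simp only [S.trmul_neg k, Finset.mul_sum]
  rw [S.trneg_add_eq_zero k]
  refine Finset.sum_congr rfl fun i' _ => ?_
  refine Finset.sum_congr rfl fun j' _ => ?_
  rw [← mul_assoc, ← mul_assoc, S.yv_mul_yv k hmed i.1 i'.1 j']

lemma diff_sq (hmed : S.IsMED) (d : ℕ) (f : S.B (d+2) → S.toRing k) :
    diffFun k S hmed d (diffFun k S hmed (d+1) f) = 0 := by
  cases d with
  | zero =>
    funext u
    exact S.key_cancel k hmed (fun i => i.elim0) f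
  | succ e =>
    funext wl
    show (if h : wl.2 = 0 then _ else _) = (0 : S.toRing k)
    split_ifs with h
    · rw [Finset.sum_congr rfl (fun i _ => S.key_cancel2 k hmed wl.1 f i)]
      simp
    · exact S.key_cancel k hmed (Fin.snoc wl.1 ⟨wl.2, h⟩) f

/-- The resolution complex. -/
noncomputable def cx (hmed : S.IsMED) : ChainComplex (ModuleCat (S.toRing k)) ℕ :=
  ChainComplex.of (FF k S) (diffL k S hmed)
    (fun n => by
      apply ModuleCat.hom_ext
      apply LinearMap.ext
      intro f
      exact S.diff_sq k hmed n f)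

end Phase4

section Phase5

variable (k : Type) [Field k] (S : NumericalSemigroup)

instance FFprojective (d : ℕ) : CategoryTheory.Projective (FF k S d) := by
  have : Module.Projective (S.toRing k) (S.B d → S.toRing k) := inferInstance
  exact (IsProjective.iff_projective _).mp this

lemma cx_d (hmed : S.IsMED) (n : ℕ) :
    (cx k S hmed).d (n+1) n = diffL k S hmed n := ChainComplex.of_d _ _ n

/-- Identity map viewing `ResMod k S` as `k`. -/
def toK (a : ResMod k S) : k := a

lemma resmod_smul (c : S.toRing k) (a : ResMod k S) :
    toK k S (c • a) = S.aug k c * toK k S a := rfl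

/-- The augmentation map from the 0-th module of the resolution. -/
noncomputable def pi0 : FF k S 0 ⟶ ModuleCat.of (S.toRing k) (ResMod k S) :=
  ModuleCat.ofHom
  { toFun := fun f => S.aug k (f PUnit.unit)
    map_add' := fun f g => map_add (S.aug k) (f PUnit.unit) (g PUnit.unit)
    map_smul' := fun c f => map_mul (S.aug k) c (f PUnit.unit) }

/-- The per-word cycle condition. -/
lemma cycle_cond (hmed : S.IsMED) {n : ℕ} (z : S.B (n+1) → S.toRing k)
    (hz : diffFun k S hmed n z = 0) (w : Fin n → V S) :
    ∑ j, S.xv k j * z (w, j) = 0 := by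
  cases n with
  | zero =>
    have h := congrFun hz PUnit.unit
    have hw : w = (fun i => i.elim0) := Subsingleton.elim _ _
    rw [hw]
    exact h
  | succ e =>
    have h := congrFun hz (Fin.init w, (w (Fin.last e) : ZMod S.mult))
    have hne : ((w (Fin.last e) : ZMod S.mult)) ≠ 0 := (w (Fin.last e)).2
    simp only [diffFun, dif_neg hne, Subtype.coe_eta, Fin.snoc_init_self] at h
    exact h

lemma cx_exact_step (hmed : S.IsMED) (n : ℕ) (z : S.B (n+1) → S.toRing k)
    (hz : diffFun k S hmed n z = 0) :
    ∃ f : S.B (n+2) → S.toRing k, diffFun k S hmed (n+1) f = z := by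
  have hsyz : ∀ w : Fin n → V S, ∃ s : V S → ZMod S.mult → S.toRing k,
      (∀ i : V S, z (w, i.1) = ∑ j, S.xv k j * s i j) ∧
      z (w, 0) = -∑ i : V S, ∑ j, S.yv k hmed i.1 j * s i j :=
    fun w => S.syzygy k hmed (fun j => z (w, j)) (S.cycle_cond k hmed z hz w)
  choose s hs1 hs2 using hsyz
  refine ⟨fun p => s (Fin.init p.1) (p.1 (Fin.last n)) p.2, ?_⟩
  funext wl
  obtain ⟨w, l⟩ := wl
  show (if h : l = 0 then _ else _) = z (w, l)
  split_ifs with h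
  · subst h
    simp only [Fin.init_snoc, Fin.snoc_last]
    exact (hs2 w).symm
  · simp only [Fin.init_snoc, Fin.snoc_last]
    exact (hs1 w ⟨l, h⟩).symm

lemma cx_exactAt_succ (hmed : S.IsMED) (n : ℕ) : (cx k S hmed).ExactAt (n+1) := by
  rw [HomologicalComplex.exactAt_iff' _ (n+2) (n+1) n (by simp) (by simp)]
  apply (ShortComplex.moduleCat_exact_iff _).mpr
  intro z hz
  have hz' : diffFun k S hmed n z = 0 := by
    have : (cx k S hmed).d (n+1) n z = 0 := hz
    rwa [cx_d] at this
  obtain ⟨f, hf⟩ := S.cx_exact_step k hmed n z hz'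
  refine ⟨f, ?_⟩
  show (cx k S hmed).d (n+2) (n+1) f = z
  rw [cx_d]
  exact hf

lemma d_comp_pi0 (hmed : S.IsMED) : (cx k S hmed).d 1 0 ≫ pi0 k S = 0 := by
  rw [cx_d]
  apply ModuleCat.hom_ext
  apply LinearMap.ext
  intro f
  show S.aug k (∑ j, S.xv k j * f ((fun i => i.elim0), j)) = 0
  rw [map_sum]
  refine Finset.sum_eq_zero fun j _ => ?_
  rw [map_mul, S.aug_xv k j, zero_mul]

lemma pi0_surjective : Function.Surjective (pi0 k S) := by
  intro a
  exact ⟨fun _ => algebraMap k (S.toRing k) a, S.aug_algebraMap k a⟩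

/-- The resolution. -/
noncomputable def resolution (hmed : S.IsMED) :
    ProjectiveResolution (ModuleCat.of (S.toRing k) (ResMod k S)) where
  complex := cx k S hmed
  projective := fun n => by
    cases n with
    | zero => exact FFprojective k S 0
    | succ e => exact FFprojective k S (e+1)
  π := (ChainComplex.toSingle₀Equiv _ _).symm ⟨pi0 k S, d_comp_pi0 k S hmed⟩
  quasiIso := ⟨fun n => by
    cases n with
    | zero =>
      rw [ChainComplex.quasiIsoAt₀_iff, ShortComplex.quasiIso_iff_of_zeros']
      rotate_left
      · exact (cx k S hmed).shape 0 0 (by simp)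
      · rfl
      · rfl
      constructor
      · apply (ShortComplex.moduleCat_exact_iff _).mpr
        intro g hg
        have hg0 : S.aug k (g PUnit.unit) = 0 := by
          have h1 : ((ChainComplex.toSingle₀Equiv (cx k S hmed)
              (ModuleCat.of (S.toRing k) (ResMod k S))).symm
                ⟨pi0 k S, d_comp_pi0 k S hmed⟩).f 0 g = 0 := hg
          rw [ChainComplex.toSingle₀Equiv_symm_apply_f_zero (C := cx k S hmed) (pi0 k S) (d_comp_pi0 k S hmed)] at h1
          exact h1
        obtain ⟨q, hq⟩ := S.gen_decomp k (g PUnit.unit) hg0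
        refine ⟨fun p => q p.2, ?_⟩
        show diffL k S hmed 0 (fun p => q p.2) = g
        funext u
        show ∑ j, S.xv k j * q j = g PUnit.unit
        exact hq.symm
      · show Epi ((((cx k S hmed).toSingle₀Equiv
            (ModuleCat.of (S.toRing k) (ResMod k S))).symm
              ⟨pi0 k S, d_comp_pi0 k S hmed⟩).f 0)
        rw [ChainComplex.toSingle₀Equiv_symm_apply_f_zero (C := cx k S hmed) (pi0 k S) (d_comp_pi0 k S hmed)]
        exact (ModuleCat.epi_iff_surjective _).mpr (pi0_surjective k S)
    | succ e =>
      rw [quasiIsoAt_iff_exactAt']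
      · exact cx_exactAt_succ k S hmed e
      · exact ChainComplex.exactAt_succ_single_obj _ _⟩

end Phase5

section Phase6

open MonoidalCategory

variable (k : Type) [Field k] (S : NumericalSemigroup)

noncomputable instance Bdeceq : ∀ d, DecidableEq (S.B d)
  | 0 => inferInstanceAs (DecidableEq PUnit)
  | (d+1) => inferInstanceAs (DecidableEq ((Fin d → V S) × ZMod S.mult))

/-- The tensoring functor `ResMod ⊗ -`. -/
noncomputable abbrev TF : ModuleCat (S.toRing k) ⥤ ModuleCat (S.toRing k) :=
  (tensoringLeft (ModuleCat (S.toRing k))).obj (ModuleCat.of (S.toRing k) (ResMod k S))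

lemma smul_resmod_zero {c : S.toRing k} (hc : S.aug k c = 0) (a : ResMod k S) :
    c • a = 0 := by
  have h2 : toK k S (c • a) = 0 := by rw [resmod_smul k S c a, hc, zero_mul]
  exact h2

lemma tmul_smul_zero {N : Type} [AddCommGroup N] [Module (S.toRing k) N]
    (a : ResMod k S) {c : S.toRing k} (hc : S.aug k c = 0) (v : N) :
    a ⊗ₜ[S.toRing k] (c • v) = 0 := by
  rw [← TensorProduct.smul_tmul, S.smul_resmod_zero k hc, TensorProduct.zero_tmul]

lemma diff_component_aug (hmed : S.IsMED) (d : ℕ) (f : S.B (d+1) → S.toRing k)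
    (b : S.B d) : S.aug k (diffFun k S hmed d f b) = 0 := by
  cases d with
  | zero =>
    show S.aug k (∑ j, S.xv k j * f ((fun i => i.elim0), j)) = 0
    rw [map_sum]
    exact Finset.sum_eq_zero fun j _ => by rw [map_mul, S.aug_xv k j, zero_mul]
  | succ e =>
    show S.aug k (if h : b.2 = 0 then _ else _) = 0
    split_ifs with h
    · rw [map_neg, map_sum, neg_eq_zero]
      refine Finset.sum_eq_zero fun i _ => ?_
      rw [map_sum]
      exact Finset.sum_eq_zero fun j _ => by rw [map_mul, S.aug_yv k hmed i.1 j, zero_mul]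
    · rw [map_sum]
      exact Finset.sum_eq_zero fun j _ => by rw [map_mul, S.aug_xv k j, zero_mul]

lemma whisker_diff_zero (hmed : S.IsMED) (d : ℕ) :
    (TF k S).map (diffL k S hmed d) = 0 := by
  apply ModuleCat.MonoidalCategory.tensor_ext
  intro a f
  show a ⊗ₜ[S.toRing k] (diffFun k S hmed d f) = 0
  have hdec : diffFun k S hmed d f = ∑ b, Pi.single b (diffFun k S hmed d f b) :=
    (Finset.univ_sum_single _).symm
  rw [hdec, TensorProduct.tmul_sum]
  refine Finset.sum_eq_zero fun b _ => ?_
  have hsingle : (Pi.single b (diffFun k S hmed d f b) : S.B d → S.toRing k)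
      = (diffFun k S hmed d f b) • (Pi.single b (1 : S.toRing k) : S.B d → S.toRing k) := by
    rw [← Pi.single_smul, smul_eq_mul, mul_one]
  rw [hsingle]
  exact S.tmul_smul_zero k a (S.diff_component_aug k hmed d f b) _

lemma mapped_d_zero (hmed : S.IsMED) (i j : ℕ) :
    (((TF k S).mapHomologicalComplex _).obj (cx k S hmed)).d i j = 0 := by
  show (TF k S).map ((cx k S hmed).d i j) = 0
  by_cases h : i = j + 1
  · subst h
    rw [cx_d]
    exact whisker_diff_zero k S hmed j
  · rw [(cx k S hmed).shape i j (fun hr => h (by simpa using hr.symm)), Functor.map_zero]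

/-- Homology of the tensored complex. -/
noncomputable def mappedHomologyIso (hmed : S.IsMED) (n : ℕ) :
    (HomologicalComplex.homologyFunctor (ModuleCat (S.toRing k)) (ComplexShape.down ℕ) n).obj
        (((TF k S).mapHomologicalComplex _).obj (cx k S hmed))
      ≅ (TF k S).obj (FF k S n) :=
  ShortComplex.LeftHomologyData.homologyIso
    (ShortComplex.LeftHomologyData.ofZeros _ (mapped_d_zero k S hmed _ _)
      (mapped_d_zero k S hmed _ _))

/-- The Tor modules, identified. -/
noncomputable def torIso (hmed : S.IsMED) (n : ℕ) :
    (((Tor (ModuleCat (S.toRing k)) n).obj (ModuleCat.of (S.toRing k) (ResMod k S))).obj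
      (ModuleCat.of (S.toRing k) (ResMod k S)))
      ≅ (TF k S).obj (FF k S n) :=
  ((resolution k S hmed).isoLeftDerivedObj (TF k S) n) ≪≫ mappedHomologyIso k S hmed n

/-- Identification of the tensor product with a direct sum of copies of the residue field. -/
noncomputable def tensorEquiv (n : ℕ) :
    (TensorProduct (S.toRing k) (ResMod k S) (S.B n → S.toRing k))
      ≃ₗ[S.toRing k] (S.B n → ResMod k S) :=
  (TensorProduct.congr (LinearEquiv.refl (S.toRing k) (ResMod k S))
      (Finsupp.linearEquivFunOnFinite (S.toRing k) (S.toRing k) (S.B n)).symm).trans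
    ((TensorProduct.finsuppScalarRight (S.toRing k) (S.toRing k) (ResMod k S) (S.B n)).trans
      (Finsupp.linearEquivFunOnFinite (S.toRing k) (ResMod k S) (S.B n)))

noncomputable def torLinearEquiv (hmed : S.IsMED) (n : ℕ) :
    (((Tor (ModuleCat (S.toRing k)) n).obj (ModuleCat.of (S.toRing k) (ResMod k S))).obj
      (ModuleCat.of (S.toRing k) (ResMod k S)))
      ≃ₗ[S.toRing k] (S.B n → ResMod k S) :=
  (torIso k S hmed n).toLinearEquiv.trans (tensorEquiv k S n)

lemma rank_restrict_congr {M N : Type} [AddCommGroup M] [Module (S.toRing k) M]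
    [AddCommGroup N] [Module (S.toRing k) N] (e : M ≃ₗ[S.toRing k] N) :
    Module.rank k (RestrictScalars k (S.toRing k) M)
      = Module.rank k (RestrictScalars k (S.toRing k) N) :=
  LinearEquiv.rank_eq
    { toFun := fun x => e ((RestrictScalars.addEquiv k (S.toRing k) M) x)
      invFun := fun y => e.symm y
      map_add' := fun x y => e.map_add x y
      left_inv := fun x => e.symm_apply_apply x
      right_inv := fun y => e.apply_symm_apply y
      map_smul' := fun c x => by
        show e (RestrictScalars.addEquiv k (S.toRing k) M (c • x)) = _
        rw [RestrictScalars.addEquiv_map_smul]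
        exact e.map_smul (algebraMap k (S.toRing k) c) (RestrictScalars.addEquiv k (S.toRing k) M x) }

noncomputable def restrictFunEquiv (n : ℕ) :
    RestrictScalars k (S.toRing k) (S.B n → ResMod k S) ≃ₗ[k] (S.B n → k) where
  toFun := fun f b => toK k S (f b)
  invFun := fun g b => g b
  map_add' := fun f g => rfl
  left_inv := fun f => rfl
  right_inv := fun g => rfl
  map_smul' := fun c f => by
    funext b
    show toK k S ((RestrictScalars.addEquiv k (S.toRing k) _ (c • f)) b) = c * toK k S (f b)
    rw [RestrictScalars.addEquiv_map_smul]
    show S.aug k (algebraMap k (S.toRing k) c) * toK k S ((RestrictScalars.addEquiv k (S.toRing k) _ f) b)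
      = c * toK k S (f b)
    rw [S.aug_algebraMap k c]
    rfl

lemma torDim_eq_card (hmed : S.IsMED) (n : ℕ) :
    S.torDim k n = (Fintype.card (S.B n) : Cardinal) := by
  unfold torDim
  rw [S.rank_restrict_congr k (torLinearEquiv k S hmed n)]
  rw [LinearEquiv.rank_eq (restrictFunEquiv k S n)]
  exact rank_fun'

lemma card_V : Fintype.card (V S) = S.mult - 1 := by
  have h1 : Fintype.card {i : ZMod S.mult // i = 0} = 1 := Fintype.card_subtype_eq 0
  have h2 := Fintype.card_subtype_compl (fun i : ZMod S.mult => i = 0)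
  rw [h1, ZMod.card] at h2
  exact h2

lemma card_B_zero : Fintype.card (S.B 0) = 1 := by
  show Fintype.card PUnit = 1
  simp

lemma card_B_succ (d : ℕ) : Fintype.card (S.B (d+1)) = S.mult * (S.mult - 1) ^ d := by
  show Fintype.card ((Fin d → V S) × ZMod S.mult) = _
  rw [Fintype.card_prod, Fintype.card_fun, S.card_V, ZMod.card, Fintype.card_fin]
  ring

end Phase6

/-- **(Consequence of Theorem 3.2.)** If `S` has multiplicity `m` and maximal embedding
dimension, then `dim_k Tor_0^R(k,k) = 1` and `dim_k Tor_d^R(k,k) = m(m-1)^{d-1}` for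
`d ≥ 1`; equivalently `P_k^R(z) = (1+z)/(1-(m-1)z)`. -/
theorem torDim_of_isMED (k : Type) [Field k] (S : NumericalSemigroup)
    (m : ℕ) (hm : S.mult = m) (hmed : S.IsMED) :
    S.torDim k 0 = 1 ∧
    ∀ d : ℕ, 1 ≤ d → S.torDim k d = ((m * (m - 1) ^ (d - 1) : ℕ) : Cardinal) := by
  subst hm
  constructor
  · rw [S.torDim_eq_card k hmed 0, S.card_B_zero]
    norm_num
  · intro d hd
    obtain ⟨e, rfl⟩ : ∃ e, d = e + 1 := ⟨d - 1, by omega⟩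
    rw [S.torDim_eq_card k hmed (e+1), S.card_B_succ e]
    norm_num

end NumericalSemigroup
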